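/- Let G be a graph of order n with no 4-cycle and spectral radius μ. Then μ² − μ ≤ n − 1. -/

import Mathlib

open Matrix Finset

lemma rayleigh_le {n : ℕ} {A : Matrix (Fin n) (Fin n) ℝ} (hA : A.IsHermitian) {μ : ℝ}
    (h : ∀ ν : ℝ, Module.End.HasEigenvalue A.mulVecLin ν → ν ≤ μ) (z : Fin n → ℝ) :
    z ⬝ᵥ (A *ᵥ z) ≤ μ * (z ⬝ᵥ z) := by
  classical
  set b := hA.eigenvectorBasis with hb
  have hip : ∀ a c : EuclideanSpace ℝ (Fin n), (inner ℝ a c : ℝ) = (a : Fin n → ℝ) ⬝ᵥ (c : Fin n → ℝ) := by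
    intro a c
    simp [PiLp.inner_apply, dotProduct, RCLike.inner_apply, starRingEnd_apply, mul_comm]
  have heig : ∀ i, hA.eigenvalues i ≤ μ := by
    intro i
    refine h _ (Module.End.hasEigenvalue_of_hasEigenvector (x := (b i : Fin n → ℝ)) ⟨?_, ?_⟩)
    · rw [Module.End.mem_eigenspace_iff]
      show A.mulVecLin (b i) = _
      rw [Matrix.mulVecLin_apply]
      exact hA.mulVec_eigenvectorBasis i
    · intro h0
      apply b.orthonormal.ne_zero i
      ext j
      simpa using congrFun h0 j
  have hAT : Aᵀ = A := by
    have := hA.eq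
    rwa [conjTranspose_eq_transpose_of_trivial] at this
  set z' : EuclideanSpace ℝ (Fin n) := WithLp.toLp 2 z with hz'
  set w' : EuclideanSpace ℝ (Fin n) := WithLp.toLp 2 (A *ᵥ z) with hw'
  have key : ∀ i, (inner ℝ (b i) w' : ℝ) = hA.eigenvalues i * (inner ℝ (b i) z' : ℝ) := by
    intro i
    rw [hip, hip]
    show (b i : Fin n → ℝ) ⬝ᵥ (A *ᵥ z) = _
    have hvm : (b i : Fin n → ℝ) ᵥ* A = A *ᵥ (b i : Fin n → ℝ) := by
      rw [← vecMul_transpose, hAT]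
    rw [dotProduct_mulVec, hvm, hz']
    rw [show A *ᵥ (b i : Fin n → ℝ) = hA.eigenvalues i • (b i : Fin n → ℝ) from hA.mulVec_eigenvectorBasis i]
    simp [dotProduct, Finset.mul_sum, mul_assoc]
  have expand := b.sum_inner_mul_inner z' w'
  have expand2 := b.sum_inner_mul_inner z' z'
  have hle : (inner ℝ z' w' : ℝ) ≤ μ * (inner ℝ z' z' : ℝ) := by
    rw [← expand, ← expand2, Finset.mul_sum]
    apply Finset.sum_le_sum
    intro i _
    rw [key i]
    have hsq : (0:ℝ) ≤ (inner ℝ z' (b i) : ℝ) * (inner ℝ (b i) z' : ℝ) := by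
      rw [real_inner_comm z' (b i)]
      exact mul_self_nonneg _
    nlinarith [heig i, hsq]
  rw [hip, hip] at hle
  exact hle

def IsSpecRad {n : ℕ} (A : Matrix (Fin n) (Fin n) ℝ) (μ : ℝ) : Prop :=
  Module.End.HasEigenvalue A.mulVecLin μ ∧
    ∀ ν : ℝ, Module.End.HasEigenvalue A.mulVecLin ν → ν ≤ μ

def Has4Cycle {V : Type*} (G : SimpleGraph V) : Prop :=
  ∃ a b c d : V, G.Adj a b ∧ G.Adj b c ∧ G.Adj c d ∧ G.Adj d a ∧ a ≠ c ∧ b ≠ d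

theorem C4free_spectral (n : ℕ) (G : SimpleGraph (Fin n)) [DecidableRel G.Adj] (μ : ℝ)
    (hC4 : ¬ Has4Cycle G)
    (hμ : IsSpecRad (G.adjMatrix ℝ) μ) :
    μ ^ 2 - μ ≤ (n : ℝ) - 1 := by
  classical
  set A : Matrix (Fin n) (Fin n) ℝ := G.adjMatrix ℝ with hAdef
  have hA : A.IsHermitian := by
    rw [Matrix.IsHermitian, conjTranspose_eq_transpose_of_trivial]
    exact G.transpose_adjMatrix
  obtain ⟨hev, hmax⟩ := hμ
  obtain ⟨x, hx⟩ := hev.exists_hasEigenvector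
  have hxe : A *ᵥ x = μ • x := by
    have := hx.apply_eq_smul
    rwa [Matrix.mulVecLin_apply] at this
  have hx0 : x ≠ 0 := hx.right
  obtain ⟨i₀, hi₀⟩ : ∃ i, x i ≠ 0 := Function.ne_iff.mp hx0
  have hn : 0 < n := Fin.pos i₀
  -- μ ≥ 0
  have hμ0 : 0 ≤ μ := by
    set o : Fin n → ℝ := fun _ => 1 with ho
    have h1 := rayleigh_le hA hmax o
    have hL : (0:ℝ) ≤ o ⬝ᵥ (A *ᵥ o) := by
      rw [dotProduct]
      apply Finset.sum_nonneg
      intro v _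
      have : (A *ᵥ o) v = ∑ u ∈ G.neighborFinset v, o u := G.adjMatrix_mulVec_apply v o
      rw [this, ho]
      positivity
    have hR : (o ⬝ᵥ o) = (n : ℝ) := by
      simp [dotProduct, ho]
    rw [hR] at h1
    have hnR : (0:ℝ) < n := by exact_mod_cast hn
    nlinarith [h1, hL, hnR]
  set y : Fin n → ℝ := fun i => |x i| with hy
  have hy0 : ∀ v, 0 ≤ y v := fun v => abs_nonneg _
  -- entrywise A y ≥ μ y
  have h1 : ∀ v, μ * y v ≤ (A *ᵥ y) v := by
    intro v
    have hv : (A *ᵥ x) v = μ * x v := by rw [hxe]; rfl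
    have : μ * y v = |(A *ᵥ x) v| := by
      rw [hv, abs_mul, abs_of_nonneg hμ0]
    rw [this, G.adjMatrix_mulVec_apply, G.adjMatrix_mulVec_apply]
    exact Finset.abs_sum_le_sum_abs _ _
  -- complementary slackness
  have hray := rayleigh_le hA hmax y
  have hslack : ∀ v, y v * ((A *ᵥ y) v - μ * y v) = 0 := by
    have hsum : ∑ v, y v * ((A *ᵥ y) v - μ * y v) = y ⬝ᵥ (A *ᵥ y) - μ * (y ⬝ᵥ y) := by
      simp only [dotProduct, Finset.mul_sum, ← Finset.sum_sub_distrib]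
      exact Finset.sum_congr rfl fun v _ => by ring
    have hzero : ∑ v, y v * ((A *ᵥ y) v - μ * y v) = 0 := by
      have hge : (0:ℝ) ≤ ∑ v, y v * ((A *ᵥ y) v - μ * y v) :=
        Finset.sum_nonneg fun v _ => mul_nonneg (hy0 v) (by linarith [h1 v])
      have hle' : ∑ v, y v * ((A *ᵥ y) v - μ * y v) ≤ 0 := by
        rw [hsum]; linarith [hray]
      linarith
    intro v
    have := (Finset.sum_eq_zero_iff_of_nonneg
      (fun v _ => mul_nonneg (hy0 v) (by linarith [h1 v]))).mp hzero v (mem_univ v)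
    exact this
  -- pick maximizing vertex
  obtain ⟨u, -, hu⟩ := Finset.exists_max_image (univ : Finset (Fin n)) y ⟨i₀, mem_univ i₀⟩
  have hyu : 0 < y u := lt_of_lt_of_le (abs_pos.mpr hi₀) (hu i₀ (mem_univ i₀))
  have key1 : (A *ᵥ y) u = μ * y u := by
    have := hslack u
    rcases mul_eq_zero.mp this with h | h
    · exact absurd h (ne_of_gt hyu)
    · linarith
  -- second moment bound
  have key2 : μ * μ * y u ≤ ∑ w, (A * A) u w * y w := by
    have : μ * (μ * y u) ≤ μ * (A *ᵥ y) u := by rw [key1]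
    calc μ * μ * y u = μ * (A *ᵥ y) u := by rw [key1]; ring
    _ = ∑ v ∈ G.neighborFinset u, μ * y v := by
        rw [G.adjMatrix_mulVec_apply, Finset.mul_sum]
    _ ≤ ∑ v ∈ G.neighborFinset u, (A *ᵥ y) v := Finset.sum_le_sum fun v _ => h1 v
    _ = (A *ᵥ (A *ᵥ y)) u := (G.adjMatrix_mulVec_apply u _).symm
    _ = ((A * A) *ᵥ y) u := by rw [← Matrix.mulVec_mulVec]
    _ = ∑ w, (A * A) u w * y w := by rw [Matrix.mulVec, dotProduct]
  -- the coefficient bounds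
  have hcodeg : ∀ w, w ≠ u → (A * A) u w ≤ 1 := by
    intro w hw
    rw [G.adjMatrix_mul_apply]
    have : ∑ v ∈ G.neighborFinset u, A v w
        = ((G.neighborFinset u).filter (fun v => G.Adj v w)).card := by
      rw [Finset.card_filter]
      push_cast
      apply Finset.sum_congr rfl
      intro v _
      simp [hAdef, SimpleGraph.adjMatrix_apply]
    rw [this]
    by_contra hgt
    push_neg at hgt
    have h2 : 1 < ((G.neighborFinset u).filter (fun v => G.Adj v w)).card := by
      exact_mod_cast hgt
    obtain ⟨b, hb, d, hd, hbd⟩ := Finset.one_lt_card.mp h2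
    simp only [Finset.mem_filter, SimpleGraph.mem_neighborFinset] at hb hd
    exact hC4 ⟨u, b, w, d, hb.1, hb.2, hd.2.symm, hd.1.symm, hw.symm, hbd⟩
  set t : Fin n → ℝ := fun w => if w = u then (G.degree u : ℝ) else if G.Adj u w then 0 else 1 with ht
  have hterm : ∀ w, ((A * A) u w - A u w) * y w ≤ t w * y u := by
    intro w
    by_cases hwu : w = u
    · subst hwu
      have hAA : (A * A) w w = (G.degree w : ℝ) := G.adjMatrix_mul_self_apply_self w
      have hAww : A w w = 0 := by simp [hAdef]
      rw [hAA, hAww, ht]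
      simp
    · by_cases hadj : G.Adj u w
      · have hc : (A * A) u w - A u w ≤ 0 := by
          have := hcodeg w hwu
          have : A u w = 1 := by simp [hAdef, hadj]
          linarith [hcodeg w hwu]
        have : ((A * A) u w - A u w) * y w ≤ 0 := mul_nonpos_of_nonpos_of_nonneg hc (hy0 w)
        rw [ht]; simp only [hwu, if_neg, hadj, if_pos]
        simpa [hwu, hadj] using this
      · have hc : (A * A) u w - A u w ≤ 1 := by
          have : A u w = 0 := by simp [hAdef, hadj]
          linarith [hcodeg w hwu]
        have hyw : y w ≤ y u := hu w (mem_univ w)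
        have hle2 : ((A * A) u w - A u w) * y w ≤ 1 * y u :=
          mul_le_mul hc hyw (hy0 w) zero_le_one
        rw [ht]
        simpa [hwu, hadj] using hle2
  have htsum : ∑ w, t w = (n : ℝ) - 1 := by
    rw [← Finset.add_sum_erase _ t (mem_univ u)]
    have h1' : t u = (G.degree u : ℝ) := by simp [ht]
    have h2' : ∑ w ∈ univ.erase u, t w
        = (((univ.erase u).filter (fun w => ¬ G.Adj u w)).card : ℝ) := by
      rw [Finset.card_eq_sum_ones]
      push_cast
      rw [Finset.sum_filter]
      apply Finset.sum_congr rfl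
      intro w hw
      have hwu : w ≠ u := (Finset.mem_erase.mp hw).1
      by_cases hadj : G.Adj u w <;> simp [ht, hwu, hadj]
    have hcard : (G.degree u : ℕ) + ((univ.erase u).filter (fun w => ¬ G.Adj u w)).card = n - 1 := by
      have hfa : (univ.erase u).filter (fun w => G.Adj u w) = G.neighborFinset u := by
        ext w
        simp only [Finset.mem_filter, Finset.mem_erase, Finset.mem_univ, and_true, true_and,
          SimpleGraph.mem_neighborFinset]
        exact ⟨fun h => h.2, fun h => ⟨(G.ne_of_adj h).symm, h⟩⟩
      have := Finset.card_filter_add_card_filter_not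
        (s := univ.erase u) (p := fun w => G.Adj u w)
      rw [hfa] at this
      rw [Finset.card_erase_of_mem (mem_univ u), Finset.card_univ, Fintype.card_fin] at this
      rw [← this, SimpleGraph.card_neighborFinset_eq_degree]
    rw [h1', h2']
    have hcast : ((G.degree u : ℝ)) + ((((univ.erase u).filter (fun w => ¬ G.Adj u w)).card : ℕ) : ℝ)
        = ((n - 1 : ℕ) : ℝ) := by exact_mod_cast congrArg (Nat.cast (R := ℝ)) hcard
    rw [hcast, Nat.cast_sub hn, Nat.cast_one]
  -- combine
  have main : (μ * μ - μ) * y u ≤ ((n : ℝ) - 1) * y u := by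
    have hAu : (A *ᵥ y) u = ∑ w, A u w * y w := by rw [Matrix.mulVec, dotProduct]
    have step : (μ * μ - μ) * y u ≤ ∑ w, ((A * A) u w - A u w) * y w := by
      have e1 : ∑ w, ((A * A) u w - A u w) * y w
          = (∑ w, (A * A) u w * y w) - ∑ w, A u w * y w := by
        rw [← Finset.sum_sub_distrib]
        apply Finset.sum_congr rfl
        intro w _
        ring
      rw [e1, ← hAu, key1]
      have := key2
      nlinarith [key2]
    calc (μ * μ - μ) * y u ≤ ∑ w, ((A * A) u w - A u w) * y w := step
    _ ≤ ∑ w, t w * y u := Finset.sum_le_sum fun w _ => hterm w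
    _ = (∑ w, t w) * y u := by rw [Finset.sum_mul]
    _ = ((n : ℝ) - 1) * y u := by rw [htsum]
  have := le_of_mul_le_mul_right main hyu
  nlinarith [this]
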